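/- For a prime p, n ∈ ℕ with base-p digits n_σ, and i ≥ 1, the number of j ∈ {0,...,n} such that p ∣ C(n,j) and the pair (n,j) lies in some class η̄ with η ≥ i equals Σ(i,n) = n + 1 − (1 + Σ_{μ=0}^{i-1} n_μ p^μ) · Π_{σ=i}^∞ (n_σ + 1). -/

import Mathlib

/-- The σ-th digit of `x` in base `p`. -/
def digit (p x σ : ℕ) : ℕ := x / p ^ σ % p

/-- For a pair `(n,j)` with `p ∣ C(n,j)`, the class index `i` of `(n,j)`:
with `L := max {σ | j_σ > n_σ}`, it is `i := min {σ | σ > L ∧ j_σ < n_σ}`. -/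
noncomputable def classIdx (p n j : ℕ) : ℕ :=
  sInf {σ : ℕ | σ > sSup {τ : ℕ | digit p n τ < digit p j τ} ∧ digit p j σ < digit p n σ}

lemma digit_mod {p x σ i : ℕ} (hp : 2 ≤ p) (h : σ < i) :
    digit p (x % p ^ i) σ = digit p x σ := by
  have hppos : 0 < p ^ σ := pow_pos (by omega) σ
  have h1 : p ^ (i - σ - 1) * (p * p ^ σ) = p ^ i := by
    rw [← pow_succ', ← pow_add]; congr 1; omega
  have hx : x = (x % p ^ i) + (x / p ^ i * p ^ (i - σ - 1) * p) * p ^ σ := by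
    calc x = p ^ i * (x / p ^ i) + x % p ^ i := (Nat.div_add_mod x (p ^ i)).symm
    _ = (x % p ^ i) + (x / p ^ i * p ^ (i - σ - 1) * p) * p ^ σ := by
        rw [← h1]; ring
  unfold digit
  conv_rhs => rw [hx]
  rw [Nat.add_mul_div_right _ _ hppos, mul_assoc, ← mul_assoc,
    Nat.add_mul_mod_self_right]

lemma digit_shift (p x k σ : ℕ) : digit p (x / p ^ k) σ = digit p x (k + σ) := by
  simp [digit, Nat.div_div_eq_div_mul, pow_add]

lemma digit_eq_zero_of_lt {p x σ : ℕ} (h : x < p ^ σ) : digit p x σ = 0 := by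
  simp [digit, Nat.div_eq_of_lt h]

lemma digit_succ (p x σ : ℕ) : digit p x (σ + 1) = digit p (x / p) σ := by
  simp [digit, Nat.div_div_eq_div_mul, pow_succ, mul_comm]

lemma digit_zero (p x : ℕ) : digit p x 0 = x % p := by simp [digit]

lemma le_of_digit_le {p : ℕ} (hp : 2 ≤ p) :
    ∀ y x : ℕ, (∀ σ, digit p x σ ≤ digit p y σ) → x ≤ y := by
  intro y
  induction y using Nat.strong_induction_on with
  | _ y ih =>
    intro x h
    rcases Nat.eq_zero_or_pos y with rfl | hy
    · by_contra hx
      have hx0 : 0 < x := by omega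
      set σ := Nat.log p x with hσ
      have h1 : p ^ σ ≤ x := Nat.pow_log_le_self p (by omega)
      have : digit p x σ ≤ digit p 0 σ := h σ
      simp only [digit, Nat.zero_div, Nat.zero_mod] at this
      have h2 : x < p ^ (σ + 1) := Nat.lt_pow_succ_log_self (by omega) x
      have h3 : 1 ≤ x / p ^ σ := (Nat.one_le_div_iff (pow_pos (by omega) _)).mpr h1
      have h4 : x / p ^ σ < p := by
        rw [Nat.div_lt_iff_lt_mul (pow_pos (by omega) _), ← pow_succ']; exact h2
      rw [Nat.mod_eq_of_lt h4] at this
      omega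
    · have h0 : x % p ≤ y % p := by
        have := h 0; simpa [digit_zero] using this
      have hd : x / p ≤ y / p := by
        refine ih (y / p) (Nat.div_lt_self hy (by omega)) (x / p) (fun σ => ?_)
        have := h (σ + 1); rwa [digit_succ, digit_succ] at this
      calc x = p * (x / p) + x % p := (Nat.div_add_mod x p).symm
        _ ≤ p * (y / p) + y % p := by
            have := Nat.mul_le_mul_left p hd; omega
        _ = y := Nat.div_add_mod y p

lemma exists_digit_lt {p x y : ℕ} (hp : 2 ≤ p) (h : x < y) :
    ∃ σ, digit p x σ < digit p y σ := by
  by_contra hc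
  push_neg at hc
  exact absurd (le_of_digit_le hp x y hc) (by omega)

lemma sum_digit (p n : ℕ) :
    ∀ i, ∑ μ ∈ Finset.range i, digit p n μ * p ^ μ = n % p ^ i := by
  intro i
  induction i with
  | zero => simp [Nat.mod_one]
  | succ i ihi =>
    rw [Finset.sum_range_succ, ihi]
    have h1 : p ^ (i + 1) = p ^ i * p := pow_succ p i
    rw [h1, Nat.mod_mul]
    simp [digit]; ring

lemma mod_pow_succ' (p x k : ℕ) : x % p ^ (k + 1) = p ^ k * digit p x k + x % p ^ k := by
  rw [pow_succ, Nat.mod_mul]; simp [digit]; ring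

/-- If `j ≤ n` but digit `L` of `j` exceeds digit `L` of `n`, then some higher
digit of `j` is less than that of `n`. -/
lemma exists_gt {p n j L : ℕ} (hp : 2 ≤ p) (hj : j ≤ n)
    (hL : digit p n L < digit p j L) :
    ∃ σ, L < σ ∧ digit p j σ < digit p n σ := by
  have hpow : 0 < p ^ L := pow_pos (by omega) _
  have hmod : n % p ^ (L + 1) < j % p ^ (L + 1) := by
    rw [mod_pow_succ', mod_pow_succ']
    have h1 : n % p ^ L < p ^ L := Nat.mod_lt _ hpow
    have h2 : p ^ L * (digit p n L + 1) ≤ p ^ L * digit p j L :=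
      Nat.mul_le_mul_left _ hL
    calc p ^ L * digit p n L + n % p ^ L
        < p ^ L * digit p n L + p ^ L := by omega
      _ = p ^ L * (digit p n L + 1) := by ring
      _ ≤ p ^ L * digit p j L := h2
      _ ≤ p ^ L * digit p j L + j % p ^ L := Nat.le_add_right _ _
  have hdiv : j / p ^ (L + 1) < n / p ^ (L + 1) := by
    have h1 := Nat.div_add_mod j (p ^ (L + 1))
    have h2 := Nat.div_add_mod n (p ^ (L + 1))
    by_contra hc
    push_neg at hc
    have := Nat.mul_le_mul_left (p ^ (L + 1)) hc
    omega
  obtain ⟨σ, hσ⟩ := exists_digit_lt hp hdiv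
  rw [digit_shift, digit_shift] at hσ
  exact ⟨L + 1 + σ, by omega, hσ⟩

/-- Key comparison lemma. -/
lemma key_comp {p x y t K : ℕ} (hp : 2 ≤ p) (htK : t < K)
    (hmod : x % p ^ K ≤ y % p ^ K) (ht : digit p y t < digit p x t) :
    ∃ σ, t < σ ∧ σ < K ∧ digit p x σ < digit p y σ := by
  have ht' : digit p (y % p ^ K) t < digit p (x % p ^ K) t := by
    rw [digit_mod hp htK, digit_mod hp htK]; exact ht
  obtain ⟨σ, hσ1, hσ2⟩ := exists_gt hp hmod ht'
  have hσK : σ < K := by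
    by_contra hc
    push_neg at hc
    have : digit p (y % p ^ K) σ = 0 := digit_eq_zero_of_lt
      (lt_of_lt_of_le (Nat.mod_lt _ (pow_pos (by omega) _))
        (Nat.pow_le_pow_right (by omega) hc))
    omega
  exact ⟨σ, hσ1, hσK, by rwa [digit_mod hp hσK, digit_mod hp hσK] at hσ2⟩

lemma dvd_choose_iff {p : ℕ} (hp : p.Prime) :
    ∀ n j : ℕ, j ≤ n → (p ∣ n.choose j ↔ ∃ σ, digit p n σ < digit p j σ) := by
  haveI : Fact p.Prime := ⟨hp⟩
  intro n
  induction n using Nat.strong_induction_on with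
  | _ n ih =>
    intro j hj
    rcases Nat.eq_zero_or_pos n with rfl | hn
    · interval_cases j
      simp [hp.one_lt.ne', Nat.dvd_one, digit]
    · have lucas := (Choose.choose_modEq_choose_mod_mul_choose_div_nat (p := p) (n := n) (k := j))
      have lucas' : n.choose j % p = ((n % p).choose (j % p) * ((n / p).choose (j / p))) % p :=
        lucas
      have hdvd : p ∣ n.choose j ↔ p ∣ (n % p).choose (j % p) * (n / p).choose (j / p) := by
        rw [Nat.dvd_iff_mod_eq_zero, Nat.dvd_iff_mod_eq_zero, lucas']
      have hlow : p ∣ (n % p).choose (j % p) ↔ n % p < j % p := by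
        constructor
        · intro hd
          by_contra hc
          push_neg at hc
          have heq := Nat.choose_mul_factorial_mul_factorial hc
          have h2 : p ∣ Nat.factorial (n % p) := by
            rw [← heq]; exact Dvd.dvd.mul_right (Dvd.dvd.mul_right hd _) _
          have h3 : p ≤ n % p := (Nat.Prime.dvd_factorial hp).mp h2
          have h4 : n % p < p := Nat.mod_lt _ hp.pos
          omega
        · intro hlt
          simp [Nat.choose_eq_zero_of_lt hlt]
      have hhigh : p ∣ (n / p).choose (j / p) ↔ ∃ σ, digit p (n / p) σ < digit p (j / p) σ :=
        ih (n / p) (Nat.div_lt_self hn hp.one_lt) (j / p) (Nat.div_le_div_right hj)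
      rw [hdvd, hp.dvd_mul, hlow, hhigh]
      constructor
      · rintro (h0 | ⟨σ, hσ⟩)
        · exact ⟨0, by rwa [digit_zero, digit_zero]⟩
        · exact ⟨σ + 1, by rwa [digit_succ, digit_succ]⟩
      · rintro ⟨σ, hσ⟩
        match σ with
        | 0 => exact Or.inl (by rwa [digit_zero, digit_zero] at hσ)
        | σ + 1 => exact Or.inr ⟨σ, by rwa [digit_succ, digit_succ] at hσ⟩

lemma characterization {p : ℕ} (hp : p.Prime) {n j i : ℕ} (hi : 1 ≤ i) (hj : j ≤ n) :
    (p ∣ n.choose j ∧ i ≤ classIdx p n j) ↔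
      ¬ (j % p ^ i ≤ n % p ^ i ∧ ∀ σ, i ≤ σ → digit p j σ ≤ digit p n σ) := by
  have hp2 : 2 ≤ p := hp.two_le
  set A := {τ : ℕ | digit p n τ < digit p j τ} with hA
  set L := sSup A with hLdef
  set B := {σ : ℕ | σ > L ∧ digit p j σ < digit p n σ} with hB
  have hclass : classIdx p n j = sInf B := rfl
  have hAbdd : BddAbove A := by
    refine ⟨n, fun τ hτ => ?_⟩
    have h1 : digit p j τ ≠ 0 := by
      simp only [hA, Set.mem_setOf_eq] at hτ; omega
    have h2 : p ^ τ ≤ j := by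
      by_contra hc
      exact h1 (digit_eq_zero_of_lt (by omega))
    exact le_trans (le_of_lt (Nat.lt_pow_self (n := τ) (by omega))) (le_trans h2 hj)
  have hBne : A.Nonempty → B.Nonempty := by
    rintro hAne
    have hLA : L ∈ A := Nat.sSup_mem hAne hAbdd
    obtain ⟨σ, hσ1, hσ2⟩ := exists_gt hp2 hj hLA
    exact ⟨σ, hσ1, hσ2⟩
  constructor
  · rintro ⟨hdvd, hcls⟩ ⟨h1, h2⟩
    have hAne : A.Nonempty := (dvd_choose_iff hp n j hj).mp hdvd
    have hLA : L ∈ A := Nat.sSup_mem hAne hAbdd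
    have hLi : L < i := by
      by_contra hc
      exact absurd hLA (by simp only [hA, Set.mem_setOf_eq]; push_neg; exact h2 L (by omega))
    obtain ⟨σ, hs1, hs2, hs3⟩ := key_comp hp2 hLi h1 hLA
    have hσB : σ ∈ B := ⟨hs1, hs3⟩
    have := Nat.sInf_le hσB
    rw [hclass] at hcls
    omega
  · intro hneg
    by_cases hhigh : ∃ σ, i ≤ σ ∧ digit p n σ < digit p j σ
    · obtain ⟨σ0, hσ0i, hσ0⟩ := hhigh
      have hAne : A.Nonempty := ⟨σ0, hσ0⟩
      have hL : σ0 ≤ L := le_csSup hAbdd hσ0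
      have hdvd : p ∣ n.choose j := (dvd_choose_iff hp n j hj).mpr hAne
      have hc : classIdx p n j ∈ B := hclass ▸ Nat.sInf_mem (hBne hAne)
      exact ⟨hdvd, by have := hc.1; omega⟩
    · push_neg at hhigh
      have hmodlt : n % p ^ i < j % p ^ i := by
        by_contra hc
        push_neg at hc
        exact hneg ⟨hc, fun σ hσ => hhigh σ hσ⟩
      have hAne : A.Nonempty := by
        obtain ⟨σ, hσ⟩ := exists_digit_lt hp2 hmodlt
        have hσi : σ < i := by
          by_contra hc
          push_neg at hc
          have : digit p (j % p ^ i) σ = 0 := digit_eq_zero_of_lt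
            (lt_of_lt_of_le (Nat.mod_lt _ (pow_pos (by omega) _))
              (Nat.pow_le_pow_right (by omega) hc))
          omega
        rw [digit_mod hp2 hσi, digit_mod hp2 hσi] at hσ
        exact ⟨σ, hσ⟩
      have hLA : L ∈ A := Nat.sSup_mem hAne hAbdd
      have hLi : L < i := by
        by_contra hc
        push_neg at hc
        have := hhigh L hc
        simp only [hA, Set.mem_setOf_eq] at hLA
        omega
      have hdvd : p ∣ n.choose j := (dvd_choose_iff hp n j hj).mpr hAne
      refine ⟨hdvd, ?_⟩
      have hc : classIdx p n j ∈ B := hclass ▸ Nat.sInf_mem (hBne hAne)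
      obtain ⟨hc1, hc2⟩ := hc
      by_contra hcls
      push_neg at hcls
      obtain ⟨σ, hs1, hs2, hs3⟩ :=
        key_comp hp2 (show classIdx p n j < i from hcls) (le_of_lt hmodlt) hc2
      have hσA : σ ∈ A := hs3
      have := le_csSup hAbdd hσA
      omega

open Classical in
lemma count_digits {p : ℕ} (hp : 2 ≤ p) :
    ∀ K c, c < p ^ K →
      ((Finset.range (c + 1)).filter fun b => ∀ σ, digit p b σ ≤ digit p c σ).card
        = ∏ σ ∈ Finset.range K, (digit p c σ + 1) := by
  intro K
  induction K with
  | zero =>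
    intro c hc
    simp only [pow_zero, Nat.lt_one_iff] at hc
    subst hc
    rw [Finset.prod_range_zero]
    rw [show (0 : ℕ) + 1 = 1 from rfl]
    rw [Finset.range_one]
    rw [Finset.filter_singleton]
    simp
  | succ K ih =>
    intro c hc
    have hcp : c / p < p ^ K := by
      rw [Nat.div_lt_iff_lt_mul (by omega), ← pow_succ]; exact hc
    have main :
        ((Finset.range (c + 1)).filter fun b => ∀ σ, digit p b σ ≤ digit p c σ).card
          = ((Finset.range (c % p + 1)) ×ˢ
              ((Finset.range (c / p + 1)).filter
                fun q => ∀ σ, digit p q σ ≤ digit p (c / p) σ)).card := by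
      apply Finset.card_nbij' (fun b => (b % p, b / p)) (fun x => p * x.2 + x.1)
      · intro b hb
        simp only [Finset.mem_coe, Finset.mem_filter, Finset.mem_range] at hb
        obtain ⟨hb1, hb2⟩ := hb
        have h0 : b % p ≤ c % p := by
          have := hb2 0; rwa [digit_zero, digit_zero] at this
        have hshift : ∀ σ, digit p (b / p) σ ≤ digit p (c / p) σ := fun σ => by
          have := hb2 (σ + 1); rwa [digit_succ, digit_succ] at this
        have hq : b / p ≤ c / p := le_of_digit_le hp _ _ hshift
        simp only [Finset.mem_coe, Finset.mem_product, Finset.mem_filter, Finset.mem_range]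
        exact ⟨by omega, by omega, hshift⟩
      · intro x hx
        simp only [Finset.mem_coe, Finset.mem_product, Finset.mem_filter, Finset.mem_range] at hx
        obtain ⟨hx1, hx2, hx3⟩ := hx
        have hcm : c % p < p := Nat.mod_lt _ (by omega)
        have hb : p * x.2 + x.1 ≤ c := by
          have h1 : p * x.2 ≤ p * (c / p) := Nat.mul_le_mul_left _ (by omega)
          have h2 := Nat.div_add_mod c p
          omega
        simp only [Finset.mem_coe, Finset.mem_filter, Finset.mem_range]
        refine ⟨by omega, fun σ => ?_⟩
        have hx1p : x.1 < p := by omega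
        match σ with
        | 0 =>
          rw [digit_zero, digit_zero, Nat.mul_add_mod, Nat.mod_eq_of_lt hx1p]
          omega
        | σ + 1 =>
          rw [digit_succ, digit_succ]
          have : (p * x.2 + x.1) / p = x.2 := by
            rw [Nat.mul_add_div (by omega), Nat.div_eq_of_lt hx1p]; omega
          rw [this]
          exact hx3 σ
      · intro b _
        exact Nat.div_add_mod b p
      · intro x hx
        simp only [Finset.mem_coe, Finset.mem_product, Finset.mem_filter, Finset.mem_range] at hx
        obtain ⟨hx1, hx2, _⟩ := hx
        have hcm : c % p < p := Nat.mod_lt _ (by omega)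
        have hx1p : x.1 < p := by omega
        have h1 : (p * x.2 + x.1) % p = x.1 := by
          rw [Nat.mul_add_mod, Nat.mod_eq_of_lt hx1p]
        have h2 : (p * x.2 + x.1) / p = x.2 := by
          rw [Nat.mul_add_div (by omega), Nat.div_eq_of_lt hx1p]; omega
        beta_reduce; rw [h1, h2]
    rw [main, Finset.card_product, Finset.card_range, ih (c / p) hcp,
      Finset.prod_range_succ', mul_comm]
    congr 1
    · exact Finset.prod_congr rfl fun σ _ => by rw [digit_succ]
    · rw [digit_zero]

/-- The number of `j ∈ {0,…,n}` with `p ∣ C(n,j)` and `(n,j)` in some class `η̄` with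
`η ≥ i` equals `Σ(i,n) = n + 1 − (1 + Σ_{μ<i} n_μ p^μ) · ∏_{σ≥i} (n_σ + 1)`.
(Digits of `n` with index `σ > n` vanish, so the product over `i ≤ σ < n+1` is
the full infinite product.) -/
theorem card_classes_ge_eq_Sigma (p : ℕ) (hp : p.Prime) (n i : ℕ) (hi : 1 ≤ i) :
    (((Finset.range (n + 1)).filter fun j =>
        p ∣ Nat.choose n j ∧ i ≤ classIdx p n j).card)
      = n + 1 - (1 + ∑ μ ∈ Finset.range i, digit p n μ * p ^ μ) *
          ∏ σ ∈ Finset.Ico i (n + 1), (digit p n σ + 1) := by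
  classical
  have hp2 : 2 ≤ p := hp.two_le
  have hppos : 0 < p ^ i := pow_pos (by omega) _
  set m := n % p ^ i with hm
  set K := n + 1 - i with hK
  set c := n / p ^ i with hc
  -- bound
  have hcK : c < p ^ K := by
    rw [hc, Nat.div_lt_iff_lt_mul hppos, ← pow_add]
    calc n < p ^ (n + 1) := lt_of_lt_of_le (Nat.lt_pow_self (n := n) (by omega))
            (Nat.pow_le_pow_right (by omega) (by omega))
      _ ≤ p ^ (K + i) := Nat.pow_le_pow_right (by omega) (by omega)
  -- complement counting
  have hsplit := Finset.card_filter_add_card_filter_not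
    (s := Finset.range (n + 1))
    (p := fun j => p ∣ Nat.choose n j ∧ i ≤ classIdx p n j)
  have hcompl : ((Finset.range (n + 1)).filter fun j =>
      ¬ (p ∣ Nat.choose n j ∧ i ≤ classIdx p n j)) =
      ((Finset.range (n + 1)).filter fun j =>
        j % p ^ i ≤ m ∧ ∀ σ, i ≤ σ → digit p j σ ≤ digit p n σ) := by
    apply Finset.filter_congr
    intro j hj
    simp only [Finset.mem_range] at hj
    rw [characterization hp hi (by omega : j ≤ n)]
    simp [hm]
  -- bijection for the complement
  have hbij : (((Finset.range (n + 1)).filter fun j =>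
        j % p ^ i ≤ m ∧ ∀ σ, i ≤ σ → digit p j σ ≤ digit p n σ)).card
      = ((Finset.range (m + 1)) ×ˢ
          ((Finset.range (c + 1)).filter fun q => ∀ σ, digit p q σ ≤ digit p c σ)).card := by
    apply Finset.card_nbij' (fun j => (j % p ^ i, j / p ^ i))
      (fun x => p ^ i * x.2 + x.1)
    · intro j hj
      simp only [Finset.mem_coe, Finset.mem_filter, Finset.mem_range] at hj
      obtain ⟨hj1, hj2, hj3⟩ := hj
      have hshift : ∀ σ, digit p (j / p ^ i) σ ≤ digit p c σ := fun σ => by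
        rw [hc, digit_shift, digit_shift]
        exact hj3 (i + σ) (by omega)
      have hq : j / p ^ i ≤ c := le_of_digit_le hp2 _ _ hshift
      simp only [Finset.mem_coe, Finset.mem_product, Finset.mem_filter, Finset.mem_range]
      exact ⟨by omega, by omega, hshift⟩
    · intro x hx
      simp only [Finset.mem_coe, Finset.mem_product, Finset.mem_filter, Finset.mem_range] at hx
      obtain ⟨hx1, hx2, hx3⟩ := hx
      have hmlt : m < p ^ i := Nat.mod_lt _ hppos
      have hx1p : x.1 < p ^ i := by omega
      have hble : p ^ i * x.2 + x.1 ≤ n := by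
        have h1 : p ^ i * x.2 ≤ p ^ i * c := Nat.mul_le_mul_left _ (by omega)
        have h2 := Nat.div_add_mod n (p ^ i)
        rw [← hc, ← hm] at h2
        omega
      have hbdiv : (p ^ i * x.2 + x.1) / p ^ i = x.2 := by
        rw [Nat.mul_add_div hppos, Nat.div_eq_of_lt hx1p]; omega
      have hbmod : (p ^ i * x.2 + x.1) % p ^ i = x.1 := by
        rw [Nat.mul_add_mod, Nat.mod_eq_of_lt hx1p]
      simp only [Finset.mem_coe, Finset.mem_filter, Finset.mem_range]
      refine ⟨by omega, by rw [hbmod]; omega, fun σ hσ => ?_⟩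
      have hσeq : σ = i + (σ - i) := by omega
      rw [hσeq, ← digit_shift p _ i (σ - i), ← digit_shift p n i (σ - i), hbdiv, ← hc]
      exact hx3 (σ - i)
    · intro j _
      exact Nat.div_add_mod j (p ^ i)
    · intro x hx
      simp only [Finset.mem_coe, Finset.mem_product, Finset.mem_filter, Finset.mem_range] at hx
      obtain ⟨hx1, hx2, _⟩ := hx
      have hmlt : m < p ^ i := Nat.mod_lt _ hppos
      have hx1p : x.1 < p ^ i := by omega
      have hbdiv : (p ^ i * x.2 + x.1) / p ^ i = x.2 := by
        rw [Nat.mul_add_div hppos, Nat.div_eq_of_lt hx1p]; omega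
      have hbmod : (p ^ i * x.2 + x.1) % p ^ i = x.1 := by
        rw [Nat.mul_add_mod, Nat.mod_eq_of_lt hx1p]
      beta_reduce; rw [hbmod, hbdiv]
  -- product identification
  have hprod : ∏ σ ∈ Finset.Ico i (n + 1), (digit p n σ + 1)
      = ∏ σ ∈ Finset.range K, (digit p c σ + 1) := by
    rw [Finset.prod_Ico_eq_prod_range]
    exact Finset.prod_congr rfl fun σ _ => by rw [hc, digit_shift]
  have hcount := count_digits hp2 K c hcK
  have hsum : ∑ μ ∈ Finset.range i, digit p n μ * p ^ μ = m := sum_digit p n i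
  rw [hsum, hprod]
  rw [hcompl, hbij, Finset.card_product, Finset.card_range, hcount,
    Finset.card_range] at hsplit
  have h1m : 1 + m = m + 1 := by omega
  rw [h1m]
  omega
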